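/- Reduction underlying the undecidability for PTAs: for every PTA A with initial location ℓ0 and final location ℓf, and a fresh clock x never reset in A, there exists a PTA A' (obtained from A by adding a new initial location ℓ0' with an urgent transition to ℓ0 and a transition guarded by x = 1 resetting x to a new private location ℓpriv, and a new final location ℓf' reachable from ℓpriv under x = 0 and from ℓf under x = 1) such that for every parameter valuation v: DVisit≤0(A'[v]) = {1}, DVisit>0(A'[v]) = ∅, DPub(A'[v]) ⊆ {1}, and for every Δ ∈ ℝ≥0 ∪ {+∞}, A'[v] is weakly Δ-ET-opaque if and only if A'[v] is fully Δ-ET-opaque, if and only if ℓf is reachable in A[v] by a run of duration exactly 1. -/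

import Mathlib

open scoped ENNReal

/-- A clock constraint with real constant: (clock index, comparison code, constant).
Comparison codes: 0 ↦ <, 1 ↦ ≤, 2 ↦ =, 3 ↦ ≥, otherwise ↦ >. -/
abbrev RConstraint := ℕ × ℕ × ℝ

/-- A guard is a (conjunction of a) list of constraints. -/
abbrev RGuard := List RConstraint

/-- An edge: (source, guard, clocks to reset, target). -/
abbrev REdge := ℕ × RGuard × List ℕ × ℕ

/-- Satisfaction of a single constraint by a clock valuation. -/
def satC (μ : ℕ → ℝ) (c : RConstraint) : Prop :=
  match c.2.1 with
  | 0 => μ c.1 < c.2.2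
  | 1 => μ c.1 ≤ c.2.2
  | 2 => μ c.1 = c.2.2
  | 3 => c.2.2 ≤ μ c.1
  | _ => c.2.2 < μ c.1

/-- Satisfaction of a guard (conjunction of constraints). -/
def satG (μ : ℕ → ℝ) (g : RGuard) : Prop := ∀ c ∈ g, satC μ c

/-- Letting time `d` elapse in a clock valuation. -/
def delayVal (μ : ℕ → ℝ) (d : ℝ) : ℕ → ℝ := fun x => μ x + d

/-- Resetting the clocks in `R` to `0`. -/
def resetVal (μ : ℕ → ℝ) (R : List ℕ) : ℕ → ℝ := fun x => if x ∈ R then 0 else μ x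

/-- A (semantic) timed automaton: locations and clocks are natural numbers,
with initial, private and final locations, invariants and edges. -/
structure RTA where
  init : ℕ
  privLoc : ℕ
  finalLoc : ℕ
  inv : ℕ → RGuard
  edges : List REdge

/-- `A.IsRunFrom ℓ μ ρ` : `ρ` (a list of (delay, edge) pairs) is a valid run of `A`
starting in state `(ℓ, μ)`: delays are nonnegative, the invariant of the current
location holds throughout each delay, each edge belongs to `A`, starts at the current
location, its guard is satisfied after the delay, and the invariant of the target
location holds after resetting the clocks of the edge. -/
def RTA.IsRunFrom (A : RTA) : ℕ → (ℕ → ℝ) → List (ℝ × REdge) → Prop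
  | _, _, [] => True
  | ℓ, μ, (d, e) :: rest =>
    0 ≤ d ∧ e ∈ A.edges ∧ e.1 = ℓ ∧
    (∀ t : ℝ, 0 ≤ t → t ≤ d → satG (delayVal μ t) (A.inv ℓ)) ∧
    satG (delayVal μ d) e.2.1 ∧
    satG (resetVal (delayVal μ d) e.2.2.1) (A.inv e.2.2.2) ∧
    RTA.IsRunFrom A e.2.2.2 (resetVal (delayVal μ d) e.2.2.1) rest

/-- A run of `A`: a valid run from the initial state (initial location, all clocks 0). -/
def RTA.IsRun (A : RTA) (ρ : List (ℝ × REdge)) : Prop :=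
  satG (fun _ => 0) (A.inv A.init) ∧ A.IsRunFrom A.init (fun _ => 0) ρ

/-- The sequence of locations visited by a run. -/
def RTA.locSeq (A : RTA) (ρ : List (ℝ × REdge)) : List ℕ :=
  A.init :: ρ.map (fun s => s.2.2.2.2)

/-- The duration of a run: the sum of its delays. -/
def runDur (ρ : List (ℝ × REdge)) : ℝ := (ρ.map Prod.fst).sum

/-- Helper scanning the reversed run: sums the delays elapsed since the last entry
into location `p`. -/
def durPrivAux (p : ℕ) : List (ℝ × REdge) → ℝ → ℝ
  | [], acc => acc
  | (d, e) :: rest, acc => if e.2.2.2 = p then acc else durPrivAux p rest (acc + d)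

/-- The time elapsed between the last entry into the private location and the end
of the run. -/
def RTA.durPriv (A : RTA) (ρ : List (ℝ × REdge)) : ℝ := durPrivAux A.privLoc ρ.reverse 0

/-- A run reaching the final location, stopped at the first occurrence of the final
location (so durations are measured up to the first occurrence of `finalLoc`). -/
def RTA.ReachesFinal (A : RTA) (ρ : List (ℝ × REdge)) : Prop :=
  A.IsRun ρ ∧ (A.locSeq ρ).getLast? = some A.finalLoc ∧ A.finalLoc ∉ (A.locSeq ρ).dropLast

/-- A private run: reaches the final location after visiting the private location. -/
def RTA.IsPrivateRun (A : RTA) (ρ : List (ℝ × REdge)) : Prop :=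
  A.ReachesFinal ρ ∧ A.privLoc ∈ (A.locSeq ρ).dropLast

/-- A public run: reaches the final location without visiting the private location. -/
def RTA.IsPublicRun (A : RTA) (ρ : List (ℝ × REdge)) : Prop :=
  A.ReachesFinal ρ ∧ A.privLoc ∉ (A.locSeq ρ).dropLast

/-- Durations of public runs. -/
def RTA.DPub (A : RTA) : Set ℝ := {t | ∃ ρ, A.IsPublicRun ρ ∧ runDur ρ = t}

/-- Durations of private runs. -/
def RTA.DPriv (A : RTA) : Set ℝ := {t | ∃ ρ, A.IsPrivateRun ρ ∧ runDur ρ = t}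

/-- Durations of private runs whose last entry into the private location happened
at most `Δ` time units before reaching the final location. -/
def RTA.DVisitLE (A : RTA) (Δ : ℝ≥0∞) : Set ℝ :=
  {t | ∃ ρ, A.IsPrivateRun ρ ∧ ENNReal.ofReal (A.durPriv ρ) ≤ Δ ∧ runDur ρ = t}

/-- Durations of private runs whose last entry into the private location happened
more than `Δ` time units before reaching the final location. -/
def RTA.DVisitGT (A : RTA) (Δ : ℝ≥0∞) : Set ℝ :=
  {t | ∃ ρ, A.IsPrivateRun ρ ∧ Δ < ENNReal.ofReal (A.durPriv ρ) ∧ runDur ρ = t}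

/-- Weak Δ-ET-opacity: `DVisit≤Δ(A) ⊆ DVisit>Δ(A) ∪ DPub(A)`. -/
def RTA.WeaklyOpaque (A : RTA) (Δ : ℝ≥0∞) : Prop :=
  A.DVisitLE Δ ⊆ A.DVisitGT Δ ∪ A.DPub

/-- Full Δ-ET-opacity: `DVisit≤Δ(A) = DVisit>Δ(A) ∪ DPub(A)`. -/
def RTA.FullyOpaque (A : RTA) (Δ : ℝ≥0∞) : Prop :=
  A.DVisitLE Δ = A.DVisitGT Δ ∪ A.DPub

/-- A constraint with integer constant. -/
abbrev ZConstraint := ℕ × ℕ × ℤ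
abbrev ZGuard := List ZConstraint
abbrev ZEdge := ℕ × ZGuard × List ℕ × ℕ

/-- A timed automaton with integer constants, as finite data. -/
structure TAData where
  init : ℕ
  privLoc : ℕ
  finalLoc : ℕ
  invs : List ZGuard
  edges : List ZEdge

def zC (c : ZConstraint) : RConstraint := (c.1, c.2.1, (c.2.2 : ℝ))

/-- The semantic timed automaton of a finite-data timed automaton. -/
def TAData.toRTA (A : TAData) : RTA where
  init := A.init
  privLoc := A.privLoc
  finalLoc := A.finalLoc
  inv := fun ℓ => (A.invs.getD ℓ []).map zC
  edges := A.edges.map (fun e => (e.1, e.2.1.map zC, e.2.2.1, e.2.2.2))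
/-- A parametric constraint: (clock index, comparison code, parameter coefficients, constant),
representing `x ⋈ Σᵢ αᵢ pᵢ + d`. -/
abbrev PConstraint := ℕ × ℕ × List ℤ × ℤ
abbrev PGuard := List PConstraint
abbrev PEdge := ℕ × PGuard × List ℕ × ℕ

/-- A parametric timed automaton with integer coefficients, as finite data. -/
structure PTAData where
  init : ℕ
  privLoc : ℕ
  finalLoc : ℕ
  invs : List PGuard
  edges : List PEdge

/-- Instantiating a parametric constraint with a (rational) parameter valuation. -/
def pC (v : List ℚ) (c : PConstraint) : RConstraint :=
  (c.1, c.2.1,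
    ((((List.zipWith (fun (a : ℤ) (q : ℚ) => (a : ℚ) * q) c.2.2.1 v).sum + (c.2.2.2 : ℚ)) : ℚ) : ℝ))

/-- `A.eval v` : the timed automaton obtained from the PTA `A` by replacing each
parameter by its value under `v` (the `i`-th parameter gets value `v.getD i 0`). -/
def PTAData.eval (A : PTAData) (v : List ℚ) : RTA where
  init := A.init
  privLoc := A.privLoc
  finalLoc := A.finalLoc
  inv := fun ℓ => (A.invs.getD ℓ []).map (pC v)
  edges := A.edges.map (fun e => (e.1, e.2.1.map (pC v), e.2.2.1, e.2.2.2))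

/-- `P` holds of every constraint (in guards and invariants) of the PTA `A`. -/
def PTAData.OnConstraints (A : PTAData) (P : PConstraint → Prop) : Prop :=
  (∀ g ∈ A.invs, ∀ c ∈ g, P c) ∧ (∀ e ∈ A.edges, ∀ c ∈ e.2.1, P c)

/-- The PTA `A` only uses clocks with index `< n` (i.e., has at most `n` clocks). -/
def PTAData.ClocksIn (A : PTAData) (n : ℕ) : Prop :=
  A.OnConstraints (fun c => c.1 < n) ∧ ∀ e ∈ A.edges, ∀ x ∈ e.2.2.1, x < n

/-- The PTA `A` only uses parameters with index `< n` (i.e., has at most `n` parameters). -/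
def PTAData.ParamsIn (A : PTAData) (n : ℕ) : Prop :=
  A.OnConstraints (fun c => c.2.2.1.length ≤ n)

/-- The L/U sign condition for the coefficient `a` of one parameter (declared
lower-bound or upper-bound via `upper`) in a constraint with comparison code `op`:
upper-bound parameters occur nonnegatively in upper-bound (`<`, `≤`) constraints and
nonpositively in lower-bound (`≥`, `>`) ones, and symmetrically for lower-bound
parameters; in equality constraints parameters must not occur. -/
def luCoefOK (op : ℕ) (upper : Bool) (a : ℤ) : Prop :=
  if op ≤ 1 then (if upper then 0 ≤ a else a ≤ 0)
  else if op = 2 then a = 0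
  else (if upper then a ≤ 0 else 0 ≤ a)

/-- `A` is an L/U-PTA: its parameters can be partitioned into lower-bound and
upper-bound parameters satisfying the sign conditions in every constraint. -/
def PTAData.IsLU (A : PTAData) : Prop :=
  ∃ isUpper : ℕ → Bool,
    A.OnConstraints (fun c => ∀ i < c.2.2.1.length, luCoefOK c.2.1 (isUpper i) (c.2.2.1.getD i 0))

/-- The final location of `B` is reachable by a run of duration exactly 1. -/
def ReachesIn1 (B : RTA) : Prop :=
  ∃ ρ, B.IsRun ρ ∧ (B.locSeq ρ).getLast? = some B.finalLoc ∧ runDur ρ = 1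


/- ======================= Auxiliary development ======================= -/

namespace PTARed

/-! Bounds on clocks and locations used by a PTA. -/

def lmax (l : List ℕ) : ℕ := l.foldr max 0

lemma le_lmax {a : ℕ} {l : List ℕ} (h : a ∈ l) : a ≤ lmax l := by
  induction l with
  | nil => cases h
  | cons b l ih =>
    rcases List.mem_cons.1 h with rfl | h
    · exact le_max_left _ _
    · exact (ih h).trans (le_max_right _ _)

def gB (g : PGuard) : ℕ := lmax (g.map (fun c => c.1 + 1))

/-- A strict bound on all clocks used by `A`. -/
def XX (A : PTAData) : ℕ :=
  lmax (A.invs.map gB ++ A.edges.map (fun e => max (gB e.2.1) (lmax (e.2.2.1.map (· + 1)))))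

/-- A strict bound on all locations used by `A`. -/
def NN (A : PTAData) : ℕ :=
  lmax (A.invs.length :: (A.init + 1) :: (A.finalLoc + 1) ::
    A.edges.map (fun e => max (e.1 + 1) (e.2.2.2 + 1)))

lemma gB_lt {c : PConstraint} {g : PGuard} (hc : c ∈ g) : c.1 < gB g := by
  have := le_lmax (l := g.map (fun c => c.1 + 1)) (List.mem_map.2 ⟨c, hc, rfl⟩)
  unfold gB
  omega

lemma inv_clock_lt {A : PTAData} {g : PGuard} {c : PConstraint}
    (hg : g ∈ A.invs) (hc : c ∈ g) : c.1 < XX A := by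
  have h1 : gB g ≤ XX A :=
    le_lmax (List.mem_append_left _ (List.mem_map.2 ⟨g, hg, rfl⟩))
  have h2 := gB_lt hc
  omega

lemma edge_clock_lt {A : PTAData} {e : PEdge} {c : PConstraint}
    (he : e ∈ A.edges) (hc : c ∈ e.2.1) : c.1 < XX A := by
  have h1 : max (gB e.2.1) (lmax (e.2.2.1.map (· + 1))) ≤ XX A :=
    le_lmax (List.mem_append_right _ (List.mem_map.2 ⟨e, he, rfl⟩))
  have h2 := gB_lt hc
  omega

lemma edge_reset_lt {A : PTAData} {e : PEdge} {y : ℕ}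
    (he : e ∈ A.edges) (hy : y ∈ e.2.2.1) : y < XX A := by
  have h1 : max (gB e.2.1) (lmax (e.2.2.1.map (· + 1))) ≤ XX A :=
    le_lmax (List.mem_append_right _ (List.mem_map.2 ⟨e, he, rfl⟩))
  have h2 : y + 1 ≤ lmax (e.2.2.1.map (· + 1)) :=
    le_lmax (List.mem_map.2 ⟨y, hy, rfl⟩)
  omega

lemma invs_len_le {A : PTAData} : A.invs.length ≤ NN A :=
  le_lmax (List.mem_cons_self)

lemma init_lt {A : PTAData} : A.init < NN A := by
  have : A.init + 1 ≤ NN A :=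
    le_lmax (List.mem_cons_of_mem _ (List.mem_cons_self))
  omega

lemma final_lt {A : PTAData} : A.finalLoc < NN A := by
  have : A.finalLoc + 1 ≤ NN A :=
    le_lmax (List.mem_cons_of_mem _ (List.mem_cons_of_mem _ (List.mem_cons_self)))
  omega

lemma edge_src_lt {A : PTAData} {e : PEdge} (he : e ∈ A.edges) : e.1 < NN A := by
  have : max (e.1 + 1) (e.2.2.2 + 1) ≤ NN A :=
    le_lmax (List.mem_cons_of_mem _ (List.mem_cons_of_mem _ (List.mem_cons_of_mem _
      (List.mem_map.2 ⟨e, he, rfl⟩))))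
  omega

lemma edge_tgt_lt {A : PTAData} {e : PEdge} (he : e ∈ A.edges) : e.2.2.2 < NN A := by
  have : max (e.1 + 1) (e.2.2.2 + 1) ≤ NN A :=
    le_lmax (List.mem_cons_of_mem _ (List.mem_cons_of_mem _ (List.mem_cons_of_mem _
      (List.mem_map.2 ⟨e, he, rfl⟩))))
  omega

/-! The construction of `A'`. -/

def cX1 (A : PTAData) : PConstraint := (XX A, 2, [], 1)
def cX0 (A : PTAData) : PConstraint := (XX A, 2, [], 0)

/-- Transform of an invariant constraint, moved onto the guard of a duplicated edge:
constraints on reset clocks become constraints on the fresh clock (which equals 1). -/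
def tfC (A : PTAData) (R : List ℕ) (c : PConstraint) : PConstraint :=
  if c.1 ∈ R then (XX A, c.2.1, c.2.2.1, c.2.2.2 + 1) else c

/-- Duplicate of an edge into the final location, rerouted to the new final location. -/
def dupE (A : PTAData) (e : PEdge) : PEdge :=
  (e.1, e.2.1 ++ cX1 A :: (A.invs.getD A.finalLoc []).map (tfC A e.2.2.1),
    e.2.2.1, NN A + 2)

def eI (A : PTAData) : PEdge := (NN A, [cX0 A], [], A.init)
def eP (A : PTAData) : PEdge := (NN A, [cX1 A], [XX A], NN A + 1)
def eF (A : PTAData) : PEdge := (NN A + 1, [cX0 A], [], NN A + 2)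

/-- The modified PTA. -/
def AP (A : PTAData) : PTAData where
  init := NN A
  privLoc := NN A + 1
  finalLoc := NN A + 2
  invs := A.invs
  edges := A.edges ++
    A.edges.filterMap (fun e => if e.2.2.2 = A.finalLoc then some (dupE A e) else none) ++
    [eI A, eP A, eF A]

/-- Instantiation of a parametric edge. -/
def instE (v : List ℚ) (e : PEdge) : REdge := (e.1, e.2.1.map (pC v), e.2.2.1, e.2.2.2)

@[simp] lemma instE_src {v : List ℚ} {e : PEdge} : (instE v e).1 = e.1 := rfl
@[simp] lemma instE_grd {v : List ℚ} {e : PEdge} : (instE v e).2.1 = e.2.1.map (pC v) := rfl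
@[simp] lemma instE_rst {v : List ℚ} {e : PEdge} : (instE v e).2.2.1 = e.2.2.1 := rfl
@[simp] lemma instE_tgt {v : List ℚ} {e : PEdge} : (instE v e).2.2.2 = e.2.2.2 := rfl

lemma eval_edges (A : PTAData) (v : List ℚ) : (A.eval v).edges = A.edges.map (instE v) := rfl

end PTARed


namespace PTARed

/-! Generic structural lemmas about runs. -/

abbrev tgt (s : ℝ × REdge) : ℕ := s.2.2.2.2

lemma isRunFrom_cons {B : RTA} {ℓ : ℕ} {μ : ℕ → ℝ} {s : ℝ × REdge} {σ : List (ℝ × REdge)} :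
    B.IsRunFrom ℓ μ (s :: σ) ↔
      (0 ≤ s.1 ∧ s.2 ∈ B.edges ∧ s.2.1 = ℓ ∧
       (∀ t : ℝ, 0 ≤ t → t ≤ s.1 → satG (delayVal μ t) (B.inv ℓ)) ∧
       satG (delayVal μ s.1) s.2.2.1 ∧
       satG (resetVal (delayVal μ s.1) s.2.2.2.1) (B.inv s.2.2.2.2) ∧
       B.IsRunFrom s.2.2.2.2 (resetVal (delayVal μ s.1) s.2.2.2.1) σ) := by
  rcases s with ⟨d, e⟩
  rfl

lemma locSeq_eq (B : RTA) (ρ : List (ℝ × REdge)) :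
    B.locSeq ρ = B.init :: ρ.map tgt := rfl

def endLoc : ℕ → List (ℝ × REdge) → ℕ
  | ℓ, [] => ℓ
  | _, s :: r => endLoc (tgt s) r

def endVal (μ : ℕ → ℝ) : List (ℝ × REdge) → ℕ → ℝ
  | [] => μ
  | s :: r => endVal (resetVal (delayVal μ s.1) s.2.2.2.1) r

lemma isRunFrom_append {B : RTA} (σ : List (ℝ × REdge)) :
    ∀ {τ : List (ℝ × REdge)} {ℓ : ℕ} {μ : ℕ → ℝ},
      B.IsRunFrom ℓ μ (σ ++ τ) ↔
        (B.IsRunFrom ℓ μ σ ∧ B.IsRunFrom (endLoc ℓ σ) (endVal μ σ) τ) := by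
  induction σ with
  | nil =>
    intro τ ℓ μ
    simp [RTA.IsRunFrom, endLoc, endVal]
  | cons s σ ih =>
    intro τ ℓ μ
    rw [List.cons_append, isRunFrom_cons, isRunFrom_cons]
    simp only [endLoc, endVal]
    rw [ih]
    tauto

@[simp] lemma runDur_nil : runDur [] = 0 := rfl

lemma runDur_cons (s : ℝ × REdge) (σ : List (ℝ × REdge)) :
    runDur (s :: σ) = s.1 + runDur σ := by simp [runDur]

lemma runDur_append (σ τ : List (ℝ × REdge)) :
    runDur (σ ++ τ) = runDur σ + runDur τ := by simp [runDur]

lemma endVal_no_reset {y : ℕ} :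
    ∀ {σ : List (ℝ × REdge)} {μ : ℕ → ℝ}, (∀ s ∈ σ, y ∉ s.2.2.2.1) →
      endVal μ σ y = μ y + runDur σ := by
  intro σ
  induction σ with
  | nil => intro μ _; simp [endVal]
  | cons s σ ih =>
    intro μ h
    have hy : y ∉ s.2.2.2.1 := h s (List.mem_cons_self)
    simp only [endVal]
    rw [ih (fun t ht => h t (List.mem_cons_of_mem _ ht)), runDur_cons]
    simp [resetVal, delayVal, hy]
    ring

lemma run_edges_mem {B : RTA} :
    ∀ {σ : List (ℝ × REdge)} {ℓ : ℕ} {μ : ℕ → ℝ}, B.IsRunFrom ℓ μ σ →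
      ∀ s ∈ σ, s.2 ∈ B.edges := by
  intro σ
  induction σ with
  | nil => intro ℓ μ _ s hs; cases hs
  | cons s σ ih =>
    intro ℓ μ hrun t ht
    rw [isRunFrom_cons] at hrun
    rcases List.mem_cons.1 ht with rfl | ht
    · exact hrun.2.1
    · exact ih hrun.2.2.2.2.2.2 t ht

lemma endLoc_cases (ℓ : ℕ) :
    ∀ σ : List (ℝ × REdge), endLoc ℓ σ = ℓ ∨ ∃ s ∈ σ, endLoc ℓ σ = tgt s := by
  intro σ
  induction σ generalizing ℓ with
  | nil => exact Or.inl rfl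
  | cons s σ ih =>
    rcases ih (tgt s) with h | ⟨t, ht, h⟩
    · exact Or.inr ⟨s, List.mem_cons_self, h⟩
    · exact Or.inr ⟨t, List.mem_cons_of_mem _ ht, h⟩

/-! Satisfaction lemmas. -/

lemma satG_nil (μ : ℕ → ℝ) : satG μ [] := fun c hc => absurd hc List.not_mem_nil

lemma satG_append {μ : ℕ → ℝ} {g1 g2 : RGuard} :
    satG μ (g1 ++ g2) ↔ satG μ g1 ∧ satG μ g2 := by
  simp [satG, List.mem_append, or_imp, forall_and]

lemma satG_cons {μ : ℕ → ℝ} {c : RConstraint} {g : RGuard} :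
    satG μ (c :: g) ↔ satC μ c ∧ satG μ g := by
  simp [satG, List.mem_cons, or_imp, forall_and]

lemma satG_singleton {μ : ℕ → ℝ} {c : RConstraint} : satG μ [c] ↔ satC μ c := by
  simp [satG]

lemma satC_pair {μ : ℕ → ℝ} {x : ℕ} {r : ℝ} : satC μ (x, (2 : ℕ), r) ↔ μ x = r := Iff.rfl

/-- The real constant of an instantiated constraint. -/
def pc2 (v : List ℚ) (α : List ℤ) (d : ℤ) : ℝ :=
  ((((List.zipWith (fun (a : ℤ) (q : ℚ) => (a : ℚ) * q) α v).sum + (d : ℚ)) : ℚ) : ℝ)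

lemma pC_eq (v : List ℚ) (y op : ℕ) (α : List ℤ) (d : ℤ) :
    pC v (y, op, α, d) = (y, op, pc2 v α d) := rfl

lemma pc2_succ (v : List ℚ) (α : List ℤ) (d : ℤ) : pc2 v α (d + 1) = pc2 v α d + 1 := by
  unfold pc2
  push_cast
  ring

lemma pC_X1 (v : List ℚ) (A : PTAData) : pC v (cX1 A) = (XX A, 2, (1 : ℝ)) := by
  show pC v (XX A, 2, ([] : List ℤ), (1 : ℤ)) = _
  rw [pC_eq]
  unfold pc2
  norm_num

lemma pC_X0 (v : List ℚ) (A : PTAData) : pC v (cX0 A) = (XX A, 2, (0 : ℝ)) := by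
  show pC v (XX A, 2, ([] : List ℤ), (0 : ℤ)) = _
  rw [pC_eq]
  unfold pc2
  norm_num

lemma satC_congr {μ μ' : ℕ → ℝ} {c : RConstraint} (h : μ c.1 = μ' c.1) :
    satC μ c ↔ satC μ' c := by
  rcases c with ⟨y, op, r⟩
  simp only at h
  rcases op with _ | _ | _ | _ | op <;> simp [satC, h]

lemma satC_tf {A : PTAData} {v : List ℚ} {μ : ℕ → ℝ} {R : List ℕ} {c : PConstraint}
    (hx : μ (XX A) = 1) :
    satC (resetVal μ R) (pC v c) ↔ satC μ (pC v (tfC A R c)) := by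
  rcases c with ⟨y, op, α, d⟩
  by_cases hm : y ∈ R
  · have htf : tfC A R (y, op, α, d) = (XX A, op, α, d + 1) := by
      simp [tfC, hm]
    rw [htf, pC_eq, pC_eq, pc2_succ]
    have hv : resetVal μ R y = 0 := by simp [resetVal, hm]
    rcases op with _ | _ | _ | _ | op <;>
      simp only [satC, hv, hx] <;> constructor <;> intro h <;> linarith
  · have htf : tfC A R (y, op, α, d) = (y, op, α, d) := by
      simp [tfC, hm]
    rw [htf]
    refine satC_congr ?_
    simp [resetVal, pC_eq, hm]

lemma satG_tf {A : PTAData} {v : List ℚ} {μ : ℕ → ℝ} {R : List ℕ} (g : PGuard)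
    (hx : μ (XX A) = 1) :
    satG (resetVal μ R) (g.map (pC v)) ↔ satG μ ((g.map (tfC A R)).map (pC v)) := by
  unfold satG
  constructor
  · rintro h c hc
    rcases List.mem_map.1 hc with ⟨c', hc', rfl⟩
    rcases List.mem_map.1 hc' with ⟨c0, hc0, rfl⟩
    exact (satC_tf hx).1 (h _ (List.mem_map.2 ⟨c0, hc0, rfl⟩))
  · rintro h c hc
    rcases List.mem_map.1 hc with ⟨c0, hc0, rfl⟩
    exact (satC_tf hx).2 (h _ (List.mem_map.2 ⟨_, List.mem_map.2 ⟨c0, hc0, rfl⟩, rfl⟩))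

end PTARed


namespace PTARed

variable {A : PTAData} {v : List ℚ}

lemma inv_hi {ℓ : ℕ} (h : NN A ≤ ℓ) : ((AP A).eval v).inv ℓ = [] := by
  show ((AP A).invs.getD ℓ []).map (pC v) = []
  rw [List.getD_eq_default]
  · rfl
  · exact le_trans (invs_len_le (A := A)) h

lemma inv_eq : ((AP A).eval v).inv = (A.eval v).inv := rfl

lemma memA {e : PEdge} (he : e ∈ A.edges) : instE v e ∈ ((AP A).eval v).edges := by
  refine List.mem_map.2 ⟨e, ?_, rfl⟩
  exact List.mem_append_left _ (List.mem_append_left _ he)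

lemma memDup {e : PEdge} (he : e ∈ A.edges) (hf : e.2.2.2 = A.finalLoc) :
    instE v (dupE A e) ∈ ((AP A).eval v).edges := by
  refine List.mem_map.2 ⟨dupE A e, ?_, rfl⟩
  refine List.mem_append_left _ (List.mem_append_right _ ?_)
  exact List.mem_filterMap.2 ⟨e, he, by rw [if_pos hf]⟩

lemma memI : instE v (eI A) ∈ ((AP A).eval v).edges := by
  refine List.mem_map.2 ⟨eI A, ?_, rfl⟩
  refine List.mem_append_right _ ?_
  simp

lemma memP : instE v (eP A) ∈ ((AP A).eval v).edges := by
  refine List.mem_map.2 ⟨eP A, ?_, rfl⟩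
  refine List.mem_append_right _ ?_
  simp

lemma memF : instE v (eF A) ∈ ((AP A).eval v).edges := by
  refine List.mem_map.2 ⟨eF A, ?_, rfl⟩
  refine List.mem_append_right _ ?_
  simp

lemma edge_cases {b : REdge} (hb : b ∈ ((AP A).eval v).edges) :
    (∃ e ∈ A.edges, b = instE v e) ∨
    (∃ e ∈ A.edges, e.2.2.2 = A.finalLoc ∧ b = instE v (dupE A e)) ∨
    b = instE v (eI A) ∨ b = instE v (eP A) ∨ b = instE v (eF A) := by
  rcases List.mem_map.1 hb with ⟨p, hp, rfl⟩
  rcases List.mem_append.1 hp with hp | hp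
  · rcases List.mem_append.1 hp with hp | hp
    · exact Or.inl ⟨p, hp, rfl⟩
    · rcases List.mem_filterMap.1 hp with ⟨e, he, hsome⟩
      by_cases hf : e.2.2.2 = A.finalLoc
      · rw [if_pos hf] at hsome
        refine Or.inr (Or.inl ⟨e, he, hf, ?_⟩)
        rw [Option.some_inj] at hsome
        rw [hsome]
        rfl
      · rw [if_neg hf] at hsome; cases hsome
  · simp only [List.mem_cons, List.mem_singleton] at hp
    rcases hp with rfl | rfl | rfl | h
    · exact Or.inr (Or.inr (Or.inl rfl))
    · exact Or.inr (Or.inr (Or.inr (Or.inl rfl)))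
    · exact Or.inr (Or.inr (Or.inr (Or.inr rfl)))
    · cases h

lemma C_edge_facts {b : REdge} (hb : b ∈ (A.eval v).edges) :
    b.1 < NN A ∧ b.2.2.2 < NN A ∧ ∀ y ∈ b.2.2.1, y < XX A := by
  rw [eval_edges] at hb
  rcases List.mem_map.1 hb with ⟨e, he, rfl⟩
  exact ⟨edge_src_lt he, edge_tgt_lt he, fun y hy => edge_reset_lt he hy⟩

/-- Forward simulation: a run of `A'[v]` inside the locations of `A`, never entering the
new final location, is a run of `A[v]`. -/
lemma mid_fwd : ∀ {σ : List (ℝ × REdge)} {ℓ : ℕ} {μ : ℕ → ℝ}, ℓ < NN A →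
    ((AP A).eval v).IsRunFrom ℓ μ σ → (∀ s ∈ σ, tgt s ≠ NN A + 2) →
    (A.eval v).IsRunFrom ℓ μ σ ∧ ∀ s ∈ σ, ∃ e ∈ A.edges, s.2 = instE v e := by
  intro σ
  induction σ with
  | nil => intro ℓ μ _ _ _; exact ⟨trivial, by simp⟩
  | cons s σ ih =>
    intro ℓ μ hℓ hrun hLF
    rw [isRunFrom_cons] at hrun
    obtain ⟨hd, he, hsrc, hinv, hg, hinv', hrest⟩ := hrun
    have hA : ∃ e ∈ A.edges, s.2 = instE v e := by
      rcases edge_cases he with ⟨e, he', hb⟩ | ⟨e, he', hf, hb⟩ | hb | hb | hb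
      · exact ⟨e, he', hb⟩
      · exfalso
        apply hLF s (List.mem_cons_self)
        show s.2.2.2.2 = NN A + 2
        rw [hb]; rfl
      · exfalso; have : s.2.1 = NN A := by rw [hb]; rfl
        omega
      · exfalso; have : s.2.1 = NN A := by rw [hb]; rfl
        omega
      · exfalso; have : s.2.1 = NN A + 1 := by rw [hb]; rfl
        omega
    obtain ⟨e, heA, hse⟩ := hA
    have htlt : s.2.2.2.2 < NN A := by
      rw [hse]; exact edge_tgt_lt heA
    have hmem : s.2 ∈ (A.eval v).edges := by
      rw [hse, eval_edges]; exact List.mem_map.2 ⟨e, heA, rfl⟩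
    obtain ⟨ihr, ihe⟩ := ih htlt hrest (fun t ht => hLF t (List.mem_cons_of_mem _ ht))
    refine ⟨?_, ?_⟩
    · rw [isRunFrom_cons]
      exact ⟨hd, hmem, hsrc, hinv, hg, hinv', ihr⟩
    · intro t ht
      rcases List.mem_cons.1 ht with rfl | ht
      · exact ⟨e, heA, hse⟩
      · exact ihe t ht

/-- Backward simulation: every run of `A[v]` is a run of `A'[v]`. -/
lemma mid_bwd : ∀ {σ : List (ℝ × REdge)} {ℓ : ℕ} {μ : ℕ → ℝ},
    (A.eval v).IsRunFrom ℓ μ σ → ((AP A).eval v).IsRunFrom ℓ μ σ := by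
  intro σ
  induction σ with
  | nil => intro ℓ μ _; trivial
  | cons s σ ih =>
    intro ℓ μ hrun
    rw [isRunFrom_cons] at hrun ⊢
    obtain ⟨hd, he, hsrc, hinv, hg, hinv', hrest⟩ := hrun
    refine ⟨hd, ?_, hsrc, hinv, hg, hinv', ih hrest⟩
    rw [eval_edges] at he
    rcases List.mem_map.1 he with ⟨e, heA, hse⟩
    rw [← hse]
    exact memA heA

/-- No run starting outside the new initial location ever visits the private location. -/
lemma no_LP : ∀ {σ : List (ℝ × REdge)} {ℓ : ℕ} {μ : ℕ → ℝ},
    ((AP A).eval v).IsRunFrom ℓ μ σ → ℓ ≠ NN A → (NN A + 1) ∉ σ.map tgt := by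
  intro σ
  induction σ with
  | nil => intro ℓ μ _ _; simp
  | cons s σ ih =>
    intro ℓ μ hrun hℓ
    rw [isRunFrom_cons] at hrun
    obtain ⟨_, he, hsrc, _, _, _, hrest⟩ := hrun
    have hkey : s.2.2.2.2 ≠ NN A + 1 ∧ s.2.2.2.2 ≠ NN A := by
      rcases edge_cases he with ⟨e, he', hb⟩ | ⟨e, he', hf, hb⟩ | hb | hb | hb
      · have : s.2.2.2.2 < NN A := by rw [hb]; exact edge_tgt_lt he'
        omega
      · have : s.2.2.2.2 = NN A + 2 := by rw [hb]; rfl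
        omega
      · exfalso; apply hℓ; rw [← hsrc, hb]; rfl
      · exfalso; apply hℓ; rw [← hsrc, hb]; rfl
      · have : s.2.2.2.2 = NN A + 2 := by rw [hb]; rfl
        omega
    simp only [List.map_cons, List.mem_cons]
    push_neg
    exact ⟨Ne.symm hkey.1, ih hrest hkey.2⟩

end PTARed


namespace PTARed

variable {A : PTAData} {v : List ℚ}

@[simp] lemma dupE_src {e : PEdge} : (dupE A e).1 = e.1 := rfl
@[simp] lemma dupE_rst {e : PEdge} : (dupE A e).2.2.1 = e.2.2.1 := rfl
@[simp] lemma dupE_tgt {e : PEdge} : (dupE A e).2.2.2 = NN A + 2 := rfl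
@[simp] lemma eI_src : (eI A).1 = NN A := rfl
@[simp] lemma eI_tgt : (eI A).2.2.2 = A.init := rfl
@[simp] lemma eP_src : (eP A).1 = NN A := rfl
@[simp] lemma eP_tgt : (eP A).2.2.2 = NN A + 1 := rfl
@[simp] lemma eF_src : (eF A).1 = NN A + 1 := rfl
@[simp] lemma eF_tgt : (eF A).2.2.2 = NN A + 2 := rfl

lemma satG_inv_hi {μ : ℕ → ℝ} {ℓ : ℕ} (h : NN A ≤ ℓ) :
    satG μ (((AP A).eval v).inv ℓ) := by
  rw [inv_hi h]; exact satG_nil μ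

lemma getLast?_cons_concat (a b : ℕ) (l : List ℕ) :
    (a :: (l ++ [b])).getLast? = some b := by
  rw [← List.cons_append]
  exact List.getLast?_concat

lemma dropLast_cons_concat (a b : ℕ) (l : List ℕ) :
    (a :: (l ++ [b])).dropLast = a :: l := by
  rw [← List.cons_append, List.dropLast_concat]

lemma zero_val_eq : resetVal (delayVal (fun _ => (0 : ℝ)) 0) [] = fun _ => (0 : ℝ) := by
  funext y
  simp [resetVal, delayVal]

/-- Every private run of the modified automaton is the canonical one. -/
lemma priv_char {ρ : List (ℝ × REdge)} (h : ((AP A).eval v).IsPrivateRun ρ) :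
    ρ = [((1 : ℝ), instE v (eP A)), ((0 : ℝ), instE v (eF A))] := by
  obtain ⟨⟨⟨hinv0, hrun⟩, hlast, hnofin⟩, hpriv⟩ := h
  have hploc : ((AP A).eval v).privLoc = NN A + 1 := rfl
  have hfloc : ((AP A).eval v).finalLoc = NN A + 2 := rfl
  have hiloc : ((AP A).eval v).init = NN A := rfl
  rw [hploc] at hpriv
  rw [hfloc] at hlast
  cases ρ with
  | nil => simp [RTA.locSeq] at hpriv
  | cons s0 ρ₁ =>
    rw [isRunFrom_cons] at hrun
    obtain ⟨hd0, he0, hsrc0, _, hg0, hinv0', hrest⟩ := hrun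
    have hsrc0' : s0.2.1 = NN A := hsrc0
    rcases edge_cases he0 with ⟨e, heA, hb⟩ | ⟨e, heA, hf, hb⟩ | hb | hb | hb
    · exfalso
      rw [hb] at hsrc0'
      have := edge_src_lt heA
      simp at hsrc0'
      omega
    · exfalso
      rw [hb] at hsrc0'
      have := edge_src_lt heA
      simp at hsrc0'
      omega
    · -- urgent edge to `A.init`: the private location is then never visited
      exfalso
      have hts : s0.2.2.2.2 = A.init := by rw [hb]; rfl
      rw [hts] at hrest
      have hnl : (NN A + 1) ∉ ρ₁.map tgt :=
        no_LP hrest (by have := init_lt (A := A); omega)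
      have hmem := List.dropLast_subset _ hpriv
      rw [locSeq_eq] at hmem
      simp only [List.map_cons, List.mem_cons] at hmem
      have hi := init_lt (A := A)
      rcases hmem with h1 | h1 | h1
      · rw [hiloc] at h1; omega
      · have h1' : NN A + 1 = s0.2.2.2.2 := h1
        rw [hts] at h1'; omega
      · exact hnl h1
    · -- edge to the private location at time 1
      have hts : s0.2.2.2.2 = NN A + 1 := by rw [hb]; rfl
      have hgx : delayVal (fun _ => (0 : ℝ)) s0.1 (XX A) = 1 := by
        rw [hb] at hg0
        have := hg0 (pC v (cX1 A)) (by simp [instE, eP])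
        rw [pC_X1] at this
        exact this
      have hd1 : s0.1 = 1 := by
        simp [delayVal] at hgx
        exact hgx
      have hrs : s0.2.2.2.1 = [XX A] := by rw [hb]; rfl
      rw [hts, hrs] at hrest
      set μ₁ := resetVal (delayVal (fun _ => (0 : ℝ)) s0.1) [XX A] with hμ₁
      cases ρ₁ with
      | nil =>
        exfalso
        rw [locSeq_eq] at hlast
        simp only [List.map_cons, List.map_nil] at hlast
        have h2 : tgt s0 = NN A + 2 := by
          simp only [List.getLast?_cons_cons, List.getLast?_singleton,
            Option.some_inj] at hlast
          exact hlast
        have h2' : s0.2.2.2.2 = NN A + 2 := h2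
        omega
      | cons s1 ρ₂ =>
        rw [isRunFrom_cons] at hrest
        obtain ⟨hd1', he1, hsrc1, _, hg1, hinv1', hrest2⟩ := hrest
        rcases edge_cases he1 with ⟨e, heA, hb1⟩ | ⟨e, heA, hf, hb1⟩ | hb1 | hb1 | hb1
        · exfalso; rw [hb1] at hsrc1
          have := edge_src_lt heA
          simp at hsrc1
          omega
        · exfalso; rw [hb1] at hsrc1
          have := edge_src_lt heA
          simp at hsrc1
          omega
        · exfalso; rw [hb1] at hsrc1
          simp at hsrc1
        · exfalso; rw [hb1] at hsrc1
          simp at hsrc1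
        · -- edge to the new final location
          have hgx1 : delayVal μ₁ s1.1 (XX A) = 0 := by
            rw [hb1] at hg1
            have := hg1 (pC v (cX0 A)) (by simp [instE, eF])
            rw [pC_X0] at this
            exact this
          have hμx : μ₁ (XX A) = 0 := by simp [hμ₁, resetVal]
          have hd2 : s1.1 = 0 := by
            simp [delayVal, hμx] at hgx1
            exact hgx1
          have hts1 : s1.2.2.2.2 = NN A + 2 := by rw [hb1]; rfl
          cases ρ₂ with
          | nil =>
            have hs0 : s0 = ((1 : ℝ), instE v (eP A)) := by
              rw [Prod.ext_iff]; exact ⟨hd1, hb⟩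
            have hs1 : s1 = ((0 : ℝ), instE v (eF A)) := by
              rw [Prod.ext_iff]; exact ⟨hd2, hb1⟩
            rw [hs0, hs1]
          | cons s2 ρ₃ =>
            exfalso
            rw [hts1] at hrest2
            rw [isRunFrom_cons] at hrest2
            obtain ⟨_, he2, hsrc2, _⟩ := hrest2
            rcases edge_cases he2 with ⟨e, heA, hb2⟩ | ⟨e, heA, hf, hb2⟩ | hb2 | hb2 | hb2 <;>
              rw [hb2] at hsrc2
            · have := edge_src_lt heA
              simp at hsrc2
              omega
            · have := edge_src_lt heA
              simp at hsrc2
              omega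
            · simp at hsrc2
            · simp at hsrc2
            · simp at hsrc2
    · -- `eF` cannot start the run
      exfalso
      rw [hb] at hsrc0'
      simp at hsrc0'

/-- The canonical private run. -/
lemma priv_canonical :
    ((AP A).eval v).IsPrivateRun [((1 : ℝ), instE v (eP A)), ((0 : ℝ), instE v (eF A))] := by
  set μ₁ := resetVal (delayVal (fun _ => (0 : ℝ)) 1) [XX A] with hμ₁
  refine ⟨⟨⟨satG_inv_hi (Nat.le_refl _), ?_⟩, ?_, ?_⟩, ?_⟩
  · rw [isRunFrom_cons]
    refine ⟨by norm_num, memP, rfl, fun t _ _ => satG_inv_hi (Nat.le_refl _), ?_, ?_, ?_⟩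
    · show satG (delayVal (fun _ => (0 : ℝ)) 1) [pC v (cX1 A)]
      rw [satG_singleton, pC_X1, satC_pair]
      simp [delayVal]
    · exact satG_inv_hi (Nat.le_succ _)
    · rw [isRunFrom_cons]
      refine ⟨le_refl _, memF, rfl, fun t _ _ => satG_inv_hi (Nat.le_succ _), ?_, ?_, trivial⟩
      · show satG (delayVal μ₁ 0) [pC v (cX0 A)]
        rw [satG_singleton, pC_X0, satC_pair]
        simp [delayVal, hμ₁, resetVal]
      · exact satG_inv_hi (Nat.le_add_right _ 2)
  · rfl
  · show (NN A + 2) ∉ [NN A, NN A + 1]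
    intro hmem
    rcases List.mem_cons.1 hmem with h | h
    · omega
    · have := List.mem_singleton.1 h
      omega
  · show (NN A + 1) ∈ [NN A, NN A + 1]
    simp

lemma runDur_canonical :
    runDur [((1 : ℝ), instE v (eP A)), ((0 : ℝ), instE v (eF A))] = 1 := by
  simp [runDur]

lemma durPriv_canonical :
    ((AP A).eval v).durPriv [((1 : ℝ), instE v (eP A)), ((0 : ℝ), instE v (eF A))] = 0 := by
  show durPrivAux (NN A + 1)
    [((0 : ℝ), instE v (eF A)), ((1 : ℝ), instE v (eP A))] 0 = 0
  rw [show durPrivAux (NN A + 1)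
      [((0 : ℝ), instE v (eF A)), ((1 : ℝ), instE v (eP A))] 0
      = if (instE v (eF A)).2.2.2 = NN A + 1 then 0
        else durPrivAux (NN A + 1) [((1 : ℝ), instE v (eP A))] (0 + 0) from rfl]
  rw [if_neg (by simp)]
  rw [show durPrivAux (NN A + 1) [((1 : ℝ), instE v (eP A))] (0 + 0)
      = if (instE v (eP A)).2.2.2 = NN A + 1 then (0 + 0 : ℝ)
        else durPrivAux (NN A + 1) [] (0 + 0 + 1) from rfl]
  rw [if_pos (by simp)]
  norm_num

end PTARed


namespace PTARed

variable {A : PTAData} {v : List ℚ}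

@[simp] lemma dupE_grd {e : PEdge} :
    (dupE A e).2.1 = e.2.1 ++ cX1 A :: (A.invs.getD A.finalLoc []).map (tfC A e.2.2.1) := rfl

/-- Every public run of the modified automaton has duration 1, and yields a run of `A[v]`
of duration 1 reaching the final location. -/
lemma pub_main {ρ : List (ℝ × REdge)} (h : ((AP A).eval v).IsPublicRun ρ) :
    runDur ρ = 1 ∧ ReachesIn1 (A.eval v) := by
  obtain ⟨⟨⟨hinv0, hrun⟩, hlast, hnofin⟩, hnopriv⟩ := h
  have hfloc : ((AP A).eval v).finalLoc = NN A + 2 := rfl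
  have hploc : ((AP A).eval v).privLoc = NN A + 1 := rfl
  rw [hfloc] at hlast hnofin
  rw [hploc] at hnopriv
  cases ρ with
  | nil =>
    exfalso
    rw [locSeq_eq] at hlast
    simp only [List.map_nil, List.getLast?_singleton, Option.some_inj] at hlast
    have h0 : NN A = NN A + 2 := hlast
    omega
  | cons s0 ρ₁ =>
    rw [isRunFrom_cons] at hrun
    obtain ⟨hd0, he0, hsrc0, _, hg0, hinv0', hrest⟩ := hrun
    have hsrc0' : s0.2.1 = NN A := hsrc0
    -- the first edge must be the urgent edge `eI`
    have hb : s0.2 = instE v (eI A) := by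
      rcases edge_cases he0 with ⟨e, heA, hb⟩ | ⟨e, heA, hf, hb⟩ | hb | hb | hb
      · exfalso; rw [hb] at hsrc0'; have := edge_src_lt heA; simp at hsrc0'; omega
      · exfalso; rw [hb] at hsrc0'; have := edge_src_lt heA; simp at hsrc0'; omega
      · exact hb
      · -- `eP` would enter the private location, contradicting publicness
        exfalso
        have hts : s0.2.2.2.2 = NN A + 1 := by rw [hb]; rfl
        cases ρ₁ with
        | nil =>
          rw [locSeq_eq] at hlast
          simp only [List.map_cons, List.map_nil, List.getLast?_cons_cons,
            List.getLast?_singleton, Option.some_inj] at hlast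
          have h2 : s0.2.2.2.2 = NN A + 2 := hlast
          omega
        | cons s1 ρ₂ =>
          apply hnopriv
          rw [locSeq_eq]
          simp only [List.map_cons]
          rw [List.dropLast_cons₂, List.dropLast_cons₂]
          refine List.mem_cons_of_mem _ (List.mem_cons.2 (Or.inl ?_))
          exact hts.symm
      · exfalso; rw [hb] at hsrc0'; simp at hsrc0'
    have hts : s0.2.2.2.2 = A.init := by rw [hb]; rfl
    have hd00 : s0.1 = 0 := by
      have hgx : delayVal (fun _ => (0 : ℝ)) s0.1 (XX A) = 0 := by
        rw [hb] at hg0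
        have := hg0 (pC v (cX0 A)) (by simp [instE, eI])
        rw [pC_X0] at this
        exact this
      simpa [delayVal] using hgx
    have hrs : s0.2.2.2.1 = ([] : List ℕ) := by rw [hb]; rfl
    rw [hts, hrs, hd00, zero_val_eq] at hrest
    have hinvinit : satG (fun _ => (0 : ℝ)) ((A.eval v).inv A.init) := by
      rw [hts, hrs, hd00, zero_val_eq] at hinv0'
      exact hinv0'
    -- the run continues: `ρ₁` is nonempty
    have hne : ρ₁ ≠ [] := by
      intro hnil
      subst hnil
      rw [locSeq_eq] at hlast
      simp only [List.map_cons, List.map_nil, List.getLast?_cons_cons,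
        List.getLast?_singleton, Option.some_inj] at hlast
      have h2 : s0.2.2.2.2 = NN A + 2 := hlast
      have := init_lt (A := A)
      rw [hts] at h2
      omega
    obtain ⟨σ, sl, rfl⟩ : ∃ σ sl, ρ₁ = σ ++ [sl] :=
      ⟨ρ₁.dropLast, ρ₁.getLast hne, (List.dropLast_append_getLast hne).symm⟩
    -- the last edge enters the new final location
    rw [locSeq_eq] at hlast hnofin hnopriv
    simp only [List.map_cons, List.map_append, List.map_nil] at hlast hnofin hnopriv
    rw [← List.cons_append, ← List.cons_append, List.getLast?_concat] at hlast
    have htl : tgt sl = NN A + 2 := Option.some_inj.1 hlast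
    rw [← List.cons_append, ← List.cons_append, List.dropLast_concat] at hnofin hnopriv
    have hLF : ∀ s ∈ σ, tgt s ≠ NN A + 2 := fun s hs heq =>
      hnofin (List.mem_cons_of_mem _ (List.mem_cons_of_mem _ (List.mem_map.2 ⟨s, hs, heq⟩)))
    rw [isRunFrom_append] at hrest
    obtain ⟨hσ, hsl⟩ := hrest
    obtain ⟨hCσ, hedges⟩ := mid_fwd init_lt hσ hLF
    have htgtlt : ∀ s ∈ σ, tgt s < NN A := by
      intro s hs
      obtain ⟨e, heA, hse⟩ := hedges s hs
      have h1 : tgt s = e.2.2.2 := by show s.2.2.2.2 = _; rw [hse]; rfl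
      rw [h1]
      exact edge_tgt_lt heA
    have hxnr : ∀ s ∈ σ, XX A ∉ s.2.2.2.1 := by
      intro s hs hx
      obtain ⟨e, heA, hse⟩ := hedges s hs
      rw [hse] at hx
      simp only [instE_rst] at hx
      exact absurd (edge_reset_lt heA hx) (lt_irrefl _)
    have hend : endLoc A.init σ < NN A := by
      rcases endLoc_cases A.init σ with h | ⟨s, hs, h⟩
      · rw [h]; exact init_lt
      · rw [h]; exact htgtlt s hs
    have hx : endVal (fun _ => (0 : ℝ)) σ (XX A) = runDur σ := by
      rw [endVal_no_reset hxnr]; simp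
    rw [isRunFrom_cons] at hsl
    obtain ⟨hdl, hel, hsrcl, hinvl, hgl, hinvl', -⟩ := hsl
    have htl' : sl.2.2.2.2 = NN A + 2 := htl
    rcases edge_cases hel with ⟨e, heA, hbe⟩ | ⟨e, heA, hfe, hbe⟩ | hbe | hbe | hbe
    · exfalso
      have h1 : sl.2.2.2.2 = e.2.2.2 := by rw [hbe]; rfl
      have := edge_tgt_lt heA
      omega
    · -- the duplicated edge: extract the run of `A`
      rw [hbe] at hgl
      simp only [instE_grd, dupE_grd, List.map_append, List.map_cons] at hgl
      rw [satG_append, satG_cons] at hgl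
      obtain ⟨hgE, hgX, hgT⟩ := hgl
      rw [pC_X1, satC_pair] at hgX
      have hν1 : delayVal (endVal (fun _ => (0 : ℝ)) σ) sl.1 (XX A) = 1 := hgX
      have hsum : runDur σ + sl.1 = 1 := by
        have : endVal (fun _ => (0 : ℝ)) σ (XX A) + sl.1 = 1 := hν1
        rw [hx] at this
        exact this
      have hinvF : satG (resetVal (delayVal (endVal (fun _ => (0 : ℝ)) σ) sl.1) e.2.2.1)
          ((A.eval v).inv A.finalLoc) := by
        show satG _ ((A.invs.getD A.finalLoc []).map (pC v))
        exact (satG_tf _ hν1).2 hgT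
      rw [← hfe] at hinvF
      -- the corresponding run of `A`
      have hCrun : (A.eval v).IsRunFrom A.init (fun _ => (0 : ℝ)) (σ ++ [(sl.1, instE v e)]) := by
        rw [isRunFrom_append]
        refine ⟨hCσ, ?_⟩
        rw [isRunFrom_cons]
        refine ⟨hdl, ?_, ?_, hinvl, hgE, hinvF, trivial⟩
        · rw [eval_edges]; exact List.mem_map.2 ⟨e, heA, rfl⟩
        · show e.1 = endLoc A.init σ
          have h1 : sl.2.1 = e.1 := by rw [hbe]; rfl
          rw [← h1]
          exact hsrcl
      have hdurτ : runDur (σ ++ [(sl.1, instE v e)]) = 1 := by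
        rw [runDur_append]
        simp only [runDur_cons, runDur_nil]
        linarith
      constructor
      · show runDur (s0 :: (σ ++ [sl])) = 1
        rw [runDur_cons, runDur_append, hd00]
        simp only [runDur_cons, runDur_nil]
        linarith
      · refine ⟨σ ++ [(sl.1, instE v e)], ⟨hinvinit, hCrun⟩, ?_, hdurτ⟩
        rw [locSeq_eq]
        simp only [List.map_append, List.map_cons, List.map_nil]
        rw [getLast?_cons_concat]
        exact Option.some_inj.2 hfe
    · exfalso
      have h1 : sl.2.2.2.2 = A.init := by rw [hbe]; rfl
      have := init_lt (A := A)
      omega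
    · exfalso
      have h1 : sl.2.2.2.2 = NN A + 1 := by rw [hbe]; rfl
      omega
    · exfalso
      have h1 : sl.2.1 = NN A + 1 := by rw [hbe]; rfl
      rw [h1] at hsrcl
      omega

/-- Conversely, from a run of `A[v]` of duration 1 reaching the final location, we get a
public run of the modified automaton of duration 1. -/
lemma pub_exists (h : ReachesIn1 (A.eval v)) :
    ∃ ρ, ((AP A).eval v).IsPublicRun ρ ∧ runDur ρ = 1 := by
  obtain ⟨τ, ⟨hinv0, hrun⟩, hlast, hdur⟩ := h
  have hne : τ ≠ [] := by
    rintro rfl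
    simp [runDur] at hdur
  obtain ⟨σ, sl, rfl⟩ : ∃ σ sl, τ = σ ++ [sl] :=
    ⟨τ.dropLast, τ.getLast hne, (List.dropLast_append_getLast hne).symm⟩
  have htl : tgt sl = A.finalLoc := by
    rw [locSeq_eq] at hlast
    simp only [List.map_append, List.map_cons, List.map_nil] at hlast
    rw [← List.cons_append, List.getLast?_concat] at hlast
    exact Option.some_inj.1 hlast
  rw [isRunFrom_append] at hrun
  obtain ⟨hσ, hsl⟩ := hrun
  rw [isRunFrom_cons] at hsl
  obtain ⟨hdl, hel, hsrcl, hinvl, hgl, hinvl', -⟩ := hsl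
  rw [eval_edges] at hel
  obtain ⟨e, heA, hbe⟩ := List.mem_map.1 hel
  have hfe : e.2.2.2 = A.finalLoc := by
    have h1 : sl.2.2.2.2 = e.2.2.2 := by rw [← hbe]; rfl
    exact h1.symm.trans htl
  have hedgesC : ∀ s ∈ σ, s.2 ∈ (A.eval v).edges := run_edges_mem hσ
  have hxnr : ∀ s ∈ σ, XX A ∉ s.2.2.2.1 := by
    intro s hs hx
    exact absurd ((C_edge_facts (hedgesC s hs)).2.2 _ hx) (lt_irrefl _)
  have hx : endVal (fun _ => (0 : ℝ)) σ (XX A) = runDur σ := by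
    rw [endVal_no_reset hxnr]; simp
  have hsum : runDur σ + sl.1 = 1 := by
    rw [runDur_append] at hdur
    simpa [runDur_cons] using hdur
  have hinvF : satG (resetVal (delayVal (endVal (fun _ => (0 : ℝ)) σ) sl.1) e.2.2.1)
      ((A.eval v).inv A.finalLoc) := by
    rw [← hbe] at hinvl'
    simp only [instE_rst, instE_tgt] at hinvl'
    rw [hfe] at hinvl'
    exact hinvl'
  refine ⟨((0 : ℝ), instE v (eI A)) :: (σ ++ [(sl.1, instE v (dupE A e))]),
    ⟨⟨⟨satG_inv_hi (Nat.le_refl _), ?_⟩, ?_, ?_⟩, ?_⟩, ?_⟩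
  · -- it is a run of `A'[v]`
    rw [isRunFrom_cons]
    refine ⟨le_refl 0, memI, rfl, fun t _ _ => satG_inv_hi (Nat.le_refl _), ?_, ?_, ?_⟩
    · show satG (delayVal (fun _ => (0 : ℝ)) 0) [pC v (cX0 A)]
      rw [satG_singleton, pC_X0, satC_pair]
      simp [delayVal]
    · show satG (resetVal (delayVal (fun _ => (0 : ℝ)) 0) []) (((AP A).eval v).inv A.init)
      rw [zero_val_eq]
      exact hinv0
    · show ((AP A).eval v).IsRunFrom A.init
        (resetVal (delayVal (fun _ => (0 : ℝ)) 0) []) (σ ++ [(sl.1, instE v (dupE A e))])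
      rw [zero_val_eq, isRunFrom_append]
      refine ⟨mid_bwd hσ, ?_⟩
      rw [isRunFrom_cons]
      refine ⟨hdl, memDup heA hfe, ?_, hinvl, ?_, ?_, trivial⟩
      · show e.1 = endLoc A.init σ
        have h1 : sl.2.1 = e.1 := by rw [← hbe]; rfl
        rw [← h1]
        exact hsrcl
      · show satG (delayVal (endVal (fun _ => (0 : ℝ)) σ) sl.1)
          ((e.2.1 ++ cX1 A :: (A.invs.getD A.finalLoc []).map (tfC A e.2.2.1)).map (pC v))
        rw [List.map_append, satG_append, List.map_cons, satG_cons]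
        have hν1 : delayVal (endVal (fun _ => (0 : ℝ)) σ) sl.1 (XX A) = 1 := by
          show endVal (fun _ => (0 : ℝ)) σ (XX A) + sl.1 = 1
          rw [hx]
          exact hsum
        refine ⟨?_, ?_, ?_⟩
        · have h1 : sl.2.2.1 = e.2.1.map (pC v) := by rw [← hbe]; rfl
          rw [h1] at hgl
          exact hgl
        · rw [pC_X1, satC_pair]
          exact hν1
        · exact (satG_tf _ hν1).1 hinvF
      · exact satG_inv_hi (Nat.le_add_right _ 2)
  · -- it ends at the new final location
    rw [locSeq_eq]
    simp only [List.map_cons, List.map_append, List.map_nil]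
    rw [← List.cons_append, ← List.cons_append, List.getLast?_concat]
    rfl
  · -- and visits it only at the end
    rw [locSeq_eq]
    simp only [List.map_cons, List.map_append, List.map_nil]
    rw [← List.cons_append, ← List.cons_append, List.dropLast_concat]
    show (NN A + 2) ∉ _
    intro hmem
    rcases List.mem_cons.1 hmem with h1 | hmem
    · have h2 : NN A + 2 = NN A := h1
      omega
    rcases List.mem_cons.1 hmem with h1 | hmem
    · have h2 : NN A + 2 = A.init := h1
      have := init_lt (A := A)
      omega
    · obtain ⟨s, hs, heq⟩ := List.mem_map.1 hmem
      have h2 : s.2.2.2.2 = NN A + 2 := heq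
      have := (C_edge_facts (hedgesC s hs)).2.1
      omega
  · -- it never visits the private location
    rw [locSeq_eq]
    simp only [List.map_cons, List.map_append, List.map_nil]
    rw [← List.cons_append, ← List.cons_append, List.dropLast_concat]
    show (NN A + 1) ∉ _
    intro hmem
    rcases List.mem_cons.1 hmem with h1 | hmem
    · have h2 : NN A + 1 = NN A := h1
      omega
    rcases List.mem_cons.1 hmem with h1 | hmem
    · have h2 : NN A + 1 = A.init := h1
      have := init_lt (A := A)
      omega
    · obtain ⟨s, hs, heq⟩ := List.mem_map.1 hmem
      have h2 : s.2.2.2.2 = NN A + 1 := heq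
      have := (C_edge_facts (hedgesC s hs)).2.1
      omega
  · -- its duration is 1
    rw [runDur_cons, runDur_append]
    simp only [runDur_cons, runDur_nil]
    linarith

end PTARed

/-- reduction underlying Theorem 7: for every PTA `A` there exists a
PTA `A'` (obtained from `A` by adding a fresh initial location with an urgent transition
to the initial location of `A` and a transition at time 1 to a fresh private location,
and a fresh final location reachable from the private location in zero time and from the
final location of `A` at time 1 on a fresh clock never reset in `A`) such that for every
nonnegative parameter valuation `v`: `DVisit≤0(A'[v]) = {1}`, `DVisit>0(A'[v]) = ∅`,
`DPub(A'[v]) ⊆ {1}`, and for every `Δ ∈ ℝ≥0 ∪ {+∞}`, `A'[v]` is weakly Δ-ET-opaque iff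
`A'[v]` is fully Δ-ET-opaque, iff the final location of `A` is reachable in `A[v]` by a
run of duration exactly 1. -/
theorem pta_reduction (A : PTAData) :
    ∃ A' : PTAData, ∀ v : List ℚ, (∀ q ∈ v, 0 ≤ q) →
      (A'.eval v).DVisitLE 0 = {1} ∧
      (A'.eval v).DVisitGT 0 = ∅ ∧
      (A'.eval v).DPub ⊆ {1} ∧
      ∀ Δ : ℝ≥0∞,
        (((A'.eval v).WeaklyOpaque Δ ↔ (A'.eval v).FullyOpaque Δ) ∧
          ((A'.eval v).WeaklyOpaque Δ ↔ ReachesIn1 (A.eval v))) := by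
  refine ⟨PTARed.AP A, fun v _ => ?_⟩
  have hLE : ∀ Δ : ℝ≥0∞, ((PTARed.AP A).eval v).DVisitLE Δ = {1} := by
    intro Δ
    ext t
    simp only [RTA.DVisitLE, Set.mem_setOf_eq, Set.mem_singleton_iff]
    constructor
    · rintro ⟨ρ, hρ, -, rfl⟩
      rw [PTARed.priv_char hρ]
      exact PTARed.runDur_canonical
    · rintro rfl
      refine ⟨_, PTARed.priv_canonical, ?_, PTARed.runDur_canonical⟩
      rw [PTARed.durPriv_canonical]
      simp
  have hGT : ∀ Δ : ℝ≥0∞, ((PTARed.AP A).eval v).DVisitGT Δ = ∅ := by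
    intro Δ
    ext t
    simp only [RTA.DVisitGT, Set.mem_setOf_eq, Set.mem_empty_iff_false, iff_false]
    rintro ⟨ρ, hρ, hgt, -⟩
    rw [PTARed.priv_char hρ, PTARed.durPriv_canonical] at hgt
    simp at hgt
  have hPub : ((PTARed.AP A).eval v).DPub ⊆ {1} := by
    rintro t ⟨ρ, hρ, rfl⟩
    exact (PTARed.pub_main hρ).1
  have hPub1 : (1 : ℝ) ∈ ((PTARed.AP A).eval v).DPub ↔ ReachesIn1 (A.eval v) := by
    constructor
    · rintro ⟨ρ, hρ, -⟩
      exact (PTARed.pub_main hρ).2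
    · intro h
      obtain ⟨ρ, hρ, hd⟩ := PTARed.pub_exists h
      exact ⟨ρ, hρ, hd⟩
  refine ⟨hLE 0, hGT 0, hPub, fun Δ => ?_⟩
  have hW : ((PTARed.AP A).eval v).WeaklyOpaque Δ ↔
      (1 : ℝ) ∈ ((PTARed.AP A).eval v).DPub := by
    rw [RTA.WeaklyOpaque, hLE Δ, hGT Δ]
    simp [Set.singleton_subset_iff]
  have hF : ((PTARed.AP A).eval v).FullyOpaque Δ ↔
      (1 : ℝ) ∈ ((PTARed.AP A).eval v).DPub := by
    rw [RTA.FullyOpaque, hLE Δ, hGT Δ, Set.empty_union]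
    constructor
    · intro h
      rw [← h]
      exact Set.mem_singleton 1
    · intro h
      exact Set.Subset.antisymm (Set.singleton_subset_iff.2 h) hPub
  exact ⟨hW.trans hF.symm, hW.trans hPub1⟩
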